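/- Let (G, p) be a finite critical net in ℝ^k satisfying the balance condition. Then the degree of every vertex is at most √k times the number of leaves: for every vertex x of G, deg_G(x) ≤ √k · |∂X|. -/
import Mathlib

open scoped RealInnerProductSpace

open Finset

private lemma abs_eq_max_add_max (a : ℝ) : |a| = max 0 a + max 0 (-a) := by
  rcases le_total 0 a with h | h
  · rw [abs_of_nonneg h, max_eq_right h, max_eq_left (by linarith)]; ring
  · rw [abs_of_nonpos h, max_eq_left h, max_eq_right (by linarith)]; ring

/-- The flux inequality: for any linear functional `⟪u, ·⟫`, the total positive
flux of unit edge vectors out of `x` is at most the sum over leaves of the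
positive part of the flux there. -/
private lemma flux_le {k : ℕ} {V : Type*} [Fintype V] [DecidableEq V]
    (G : SimpleGraph V) [DecidableRel G.Adj]
    (p : V → EuclideanSpace ℝ (Fin k))
    (hdeg1 : ∀ x : V, 1 ≤ G.degree x)
    (hbal : ∀ x : V, 2 ≤ G.degree x →
      ∑ y ∈ G.neighborFinset x, (‖p x - p y‖)⁻¹ • (p x - p y) = 0)
    (u : EuclideanSpace ℝ (Fin k)) (x : V) :
    ∑ y ∈ G.neighborFinset x, max 0 ⟪u, (‖p y - p x‖)⁻¹ • (p y - p x)⟫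
    ≤ ∑ l ∈ Finset.univ.filter (fun l : V => G.degree l = 1),
        max 0 ⟪u, ∑ w ∈ G.neighborFinset l, (‖p l - p w‖)⁻¹ • (p l - p w)⟫ := by
  classical
  set f : V → ℝ := fun z => ⟪u, p z⟫ with hf
  set T : Finset V := univ.filter (fun z => f x < f z) with hT
  set h : V → V → ℝ := fun z w => ⟪u, (‖p z - p w‖)⁻¹ • (p z - p w)⟫ with hh
  have hval : ∀ z w, h z w = ‖p z - p w‖⁻¹ * (f z - f w) := by
    intro z w
    simp only [hh, hf, real_inner_smul_right, inner_sub_right]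
  have hanti : ∀ z w, h w z = - h z w := by
    intro z w
    rw [hval, hval, norm_sub_rev]
    ring
  have hxT : x ∉ T := by simp [hT]
  -- the inner product with the balance vector expands as a sum
  have hBsum : ∀ z : V, ⟪u, ∑ w ∈ G.neighborFinset z, (‖p z - p w‖)⁻¹ • (p z - p w)⟫
      = ∑ w ∈ G.neighborFinset z, h z w := by
    intro z
    rw [inner_sum]
  -- the "both endpoints above" part cancels
  have hA : ∑ z ∈ T, ∑ w ∈ (G.neighborFinset z).filter (fun w => w ∈ T), h z w = 0 := by
    have hrw : ∀ z : V, ∑ w ∈ (G.neighborFinset z).filter (fun w => w ∈ T), h z w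
        = ∑ w ∈ T, if G.Adj z w then h z w else 0 := by
      intro z
      rw [← Finset.sum_filter]
      apply Finset.sum_congr _ (fun _ _ => rfl)
      ext w
      simp only [Finset.mem_filter, SimpleGraph.mem_neighborFinset]
      tauto
    have hite : ∀ z w : V, (if G.Adj z w then h z w else 0)
        = -(if G.Adj w z then h w z else 0) := by
      intro z w
      by_cases hadj : G.Adj z w
      · rw [if_pos hadj, if_pos hadj.symm, hanti w z]
      · rw [if_neg hadj, if_neg (fun hc => hadj hc.symm), neg_zero]
    have hAA : ∑ z ∈ T, ∑ w ∈ T, (if G.Adj z w then h z w else 0)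
        = - ∑ z ∈ T, ∑ w ∈ T, (if G.Adj z w then h z w else 0) := by
      calc ∑ z ∈ T, ∑ w ∈ T, (if G.Adj z w then h z w else 0)
          = ∑ w ∈ T, ∑ z ∈ T, (if G.Adj z w then h z w else 0) := Finset.sum_comm
        _ = ∑ w ∈ T, ∑ z ∈ T, -(if G.Adj w z then h w z else 0) :=
            Finset.sum_congr rfl fun w _ => Finset.sum_congr rfl fun z _ => hite z w
        _ = - ∑ w ∈ T, ∑ z ∈ T, (if G.Adj w z then h w z else 0) := by
            simp
    simp only [hrw]
    linarith
  -- crossing terms are nonnegative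
  have hcross : ∀ z ∈ T, ∀ w ∈ (G.neighborFinset z).filter (fun w => w ∉ T), 0 ≤ h z w := by
    intro z hz w hw
    simp only [Finset.mem_filter, hT, Finset.mem_univ, true_and] at hz hw
    have hwle : f w ≤ f x := le_of_not_gt (by simpa [hT] using hw.2)
    rw [hval]
    have : 0 ≤ f z - f w := by linarith
    positivity
  -- the edges from x upward are among the crossing terms
  have hstep1 : ∑ y ∈ G.neighborFinset x, max 0 (h y x)
      ≤ ∑ z ∈ T, ∑ w ∈ (G.neighborFinset z).filter (fun w => w ∉ T), h z w := by
    have hLHS : ∑ y ∈ G.neighborFinset x, max 0 (h y x)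
        = ∑ z ∈ T, if G.Adj x z then h z x else 0 := by
      rw [← Finset.sum_filter]
      rw [show T.filter (fun z => G.Adj x z)
          = (G.neighborFinset x).filter (fun y => y ∈ T) by
        ext w
        simp only [Finset.mem_filter, SimpleGraph.mem_neighborFinset]
        tauto]
      rw [Finset.sum_filter]
      apply Finset.sum_congr rfl
      intro y hy
      by_cases hyT : y ∈ T
      · have : 0 ≤ h y x := by
          simp only [hT, Finset.mem_filter, Finset.mem_univ, true_and] at hyT
          rw [hval]
          have : 0 ≤ f y - f x := by linarith
          positivity
        simp [hyT, max_eq_right this]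
      · have hle : f y ≤ f x := le_of_not_gt (by simpa [hT] using hyT)
        have : h y x ≤ 0 := by
          rw [hval]
          have h1 : f y - f x ≤ 0 := by linarith
          have h2 : (0:ℝ) ≤ ‖p y - p x‖⁻¹ := by positivity
          exact mul_nonpos_of_nonneg_of_nonpos h2 h1
        simp [hyT, max_eq_left this]
    rw [hLHS]
    apply Finset.sum_le_sum
    intro z hz
    by_cases hadj : G.Adj x z
    · simp only [if_pos hadj]
      apply Finset.single_le_sum (hcross z hz)
      simp [SimpleGraph.mem_neighborFinset, hadj.symm, hxT]
    · simp only [if_neg hadj]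
      exact Finset.sum_nonneg (hcross z hz)
  -- the crossing sum equals the sum of balance vectors over T
  have hstep2 : ∑ z ∈ T, ∑ w ∈ (G.neighborFinset z).filter (fun w => w ∉ T), h z w
      = ∑ z ∈ T, ⟪u, ∑ w ∈ G.neighborFinset z, (‖p z - p w‖)⁻¹ • (p z - p w)⟫ := by
    have : ∀ z : V, ∑ w ∈ G.neighborFinset z, h z w
        = ∑ w ∈ (G.neighborFinset z).filter (fun w => w ∈ T), h z w
          + ∑ w ∈ (G.neighborFinset z).filter (fun w => ¬ (w ∈ T)), h z w :=
      fun z => (Finset.sum_filter_add_sum_filter_not _ _ _).symm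
    calc ∑ z ∈ T, ∑ w ∈ (G.neighborFinset z).filter (fun w => w ∉ T), h z w
        = ∑ z ∈ T, ∑ w ∈ (G.neighborFinset z).filter (fun w => w ∈ T), h z w
          + ∑ z ∈ T, ∑ w ∈ (G.neighborFinset z).filter (fun w => ¬ (w ∈ T)), h z w := by
          rw [hA]; ring
      _ = ∑ z ∈ T, ∑ w ∈ G.neighborFinset z, h z w := by
          rw [← Finset.sum_add_distrib]
          exact Finset.sum_congr rfl fun z _ => (this z).symm
      _ = _ := by
          exact Finset.sum_congr rfl fun z _ => (hBsum z).symm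
  -- interior vertices contribute nothing; leaves contribute at most max 0
  have hstep3 : ∑ z ∈ T, ⟪u, ∑ w ∈ G.neighborFinset z, (‖p z - p w‖)⁻¹ • (p z - p w)⟫
      ≤ ∑ l ∈ Finset.univ.filter (fun l : V => G.degree l = 1),
        max 0 ⟪u, ∑ w ∈ G.neighborFinset l, (‖p l - p w‖)⁻¹ • (p l - p w)⟫ := by
    set Bval : V → ℝ := fun z =>
      ⟪u, ∑ w ∈ G.neighborFinset z, (‖p z - p w‖)⁻¹ • (p z - p w)⟫ with hBval
    have hzero : ∀ z : V, G.degree z ≠ 1 → Bval z = 0 := by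
      intro z hz
      have : 2 ≤ G.degree z := by have := hdeg1 z; omega
      rw [hBval]
      simp [hbal z this]
    calc ∑ z ∈ T, Bval z
        = ∑ z ∈ T.filter (fun z => G.degree z = 1), Bval z := by
          symm
          apply Finset.sum_subset (Finset.filter_subset _ _)
          intro z hz hnz
          apply hzero
          intro hdz
          exact hnz (Finset.mem_filter.mpr ⟨hz, hdz⟩)
      _ ≤ ∑ z ∈ T.filter (fun z => G.degree z = 1), max 0 (Bval z) :=
          Finset.sum_le_sum fun z _ => le_max_right 0 _
      _ ≤ ∑ l ∈ Finset.univ.filter (fun l : V => G.degree l = 1), max 0 (Bval l) := by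
          apply Finset.sum_le_sum_of_subset_of_nonneg
          · intro z hz
            simp only [Finset.mem_filter] at hz ⊢
            exact ⟨Finset.mem_univ z, hz.2⟩
          · intro z _ _
            exact le_max_left 0 _
  calc ∑ y ∈ G.neighborFinset x, max 0 ⟪u, (‖p y - p x‖)⁻¹ • (p y - p x)⟫
      = ∑ y ∈ G.neighborFinset x, max 0 (h y x) := rfl
    _ ≤ _ := hstep1
    _ = _ := hstep2
    _ ≤ _ := hstep3

/-- In a finite critical net in `ℝ^k` satisfying the balance
condition, the degree of every vertex is at most `√k` times the number of leaves. -/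
theorem degree_le_sqrt_mul_card_leaves
    {k : ℕ} (hk : 1 ≤ k) {V : Type*} [Fintype V] [DecidableEq V]
    (G : SimpleGraph V) [DecidableRel G.Adj]
    (p : V → EuclideanSpace ℝ (Fin k)) (hinj : Function.Injective p)
    (hdeg1 : ∀ x : V, 1 ≤ G.degree x)
    (hnoLL : ∀ x y : V, G.Adj x y → ¬(G.degree x = 1 ∧ G.degree y = 1))
    (hbal : ∀ x : V, 2 ≤ G.degree x →
      ∑ y ∈ G.neighborFinset x, (‖p x - p y‖)⁻¹ • (p x - p y) = 0)
    (x : V) :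
    (G.degree x : ℝ)
      ≤ Real.sqrt k * (Finset.univ.filter fun l : V => G.degree l = 1).card := by
  classical
  set L : Finset V := Finset.univ.filter (fun l : V => G.degree l = 1) with hL
  set q : V → V → EuclideanSpace ℝ (Fin k) :=
    fun z w => (‖p z - p w‖)⁻¹ • (p z - p w) with hq
  -- unit length of edge directions
  have hunit : ∀ z w : V, G.Adj z w → ‖q z w‖ = 1 := by
    intro z w hzw
    have hne : p z - p w ≠ 0 := sub_ne_zero_of_ne (fun hc => hzw.ne (hinj hc))
    rw [hq]
    simp only [norm_smul, norm_inv, norm_norm]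
    exact inv_mul_cancel₀ (norm_ne_zero_iff.mpr hne)
  have hsumsq : ∀ (v : EuclideanSpace ℝ (Fin k)), ‖v‖ = 1 → ∑ j : Fin k, (v j)^2 = 1 := by
    intro v hv
    have := EuclideanSpace.norm_eq v
    rw [hv] at this
    have h2 : ∑ i : Fin k, ‖v i‖ ^ 2 = 1 := Real.sqrt_eq_one.mp this.symm
    simpa [Real.norm_eq_abs, sq_abs] using h2
  -- step 1 : degree ≤ ℓ¹-mass of the unit edge directions
  have hstep1 : (G.degree x : ℝ) ≤ ∑ y ∈ G.neighborFinset x, ∑ j : Fin k, |q y x j| := by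
    rw [← SimpleGraph.card_neighborFinset_eq_degree]
    rw [Finset.card_eq_sum_ones (G.neighborFinset x)]
    push_cast
    apply Finset.sum_le_sum
    intro y hy
    have hadj : G.Adj y x := (SimpleGraph.mem_neighborFinset G x y).mp hy |>.symm
    have h1 : ∑ j : Fin k, (q y x j)^2 = 1 := hsumsq _ (hunit y x hadj)
    have hco : ∀ j : Fin k, |q y x j| ≤ 1 := by
      intro j
      have hle : (q y x j)^2 ≤ 1 := by
        rw [← h1]
        exact Finset.single_le_sum (f := fun i => (q y x i)^2)
          (fun i _ => sq_nonneg _) (Finset.mem_univ j)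
      nlinarith [abs_nonneg (q y x j), sq_abs (q y x j)]
    calc (1:ℝ) = ∑ j : Fin k, (q y x j)^2 := h1.symm
      _ ≤ ∑ j : Fin k, |q y x j| := by
          apply Finset.sum_le_sum
          intro j _
          nlinarith [abs_nonneg (q y x j), sq_abs (q y x j), hco j]
  -- step 2 : per coordinate, apply the flux lemma in both directions
  have hstep2 : ∀ j : Fin k,
      ∑ y ∈ G.neighborFinset x, |q y x j| ≤ ∑ l ∈ L, |(∑ w ∈ G.neighborFinset l, q l w) j| := by
    intro j
    have hplus := flux_le G p hdeg1 hbal (EuclideanSpace.single j (1:ℝ)) x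
    have hminus := flux_le G p hdeg1 hbal (EuclideanSpace.single j (-1:ℝ)) x
    have hsingle : ∀ (a : ℝ) (v : EuclideanSpace ℝ (Fin k)),
        ⟪EuclideanSpace.single j a, v⟫ = a * v j := by
      intro a v
      rw [EuclideanSpace.inner_single_left]
      simp
    simp only [hsingle] at hplus hminus
    calc ∑ y ∈ G.neighborFinset x, |q y x j|
        = ∑ y ∈ G.neighborFinset x, (max 0 (1 * q y x j) + max 0 ((-1) * q y x j)) := by
          apply Finset.sum_congr rfl
          intro y _
          rw [abs_eq_max_add_max]
          ring_nf
      _ = (∑ y ∈ G.neighborFinset x, max 0 (1 * q y x j))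
          + ∑ y ∈ G.neighborFinset x, max 0 ((-1) * q y x j) := Finset.sum_add_distrib
      _ ≤ (∑ l ∈ L, max 0 (1 * (∑ w ∈ G.neighborFinset l, q l w) j))
          + ∑ l ∈ L, max 0 ((-1) * (∑ w ∈ G.neighborFinset l, q l w) j) := by
          apply add_le_add
          · calc ∑ y ∈ G.neighborFinset x, max 0 (1 * q y x j)
                ≤ _ := hplus
              _ = _ := rfl
          · calc ∑ y ∈ G.neighborFinset x, max 0 ((-1) * q y x j)
                ≤ _ := hminus
              _ = _ := rfl
      _ = ∑ l ∈ L, |(∑ w ∈ G.neighborFinset l, q l w) j| := by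
          rw [← Finset.sum_add_distrib]
          apply Finset.sum_congr rfl
          intro l _
          rw [abs_eq_max_add_max]
          ring_nf
  -- step 3 : the ℓ¹-mass at each leaf is at most √k
  have hstep3 : ∀ l ∈ L, ∑ j : Fin k, |(∑ w ∈ G.neighborFinset l, q l w) j| ≤ Real.sqrt k := by
    intro l hl
    have hdl : G.degree l = 1 := by
      simp only [hL, Finset.mem_filter] at hl
      exact hl.2
    obtain ⟨w0, hw0⟩ : ∃ w0, G.neighborFinset l = {w0} := by
      apply Finset.card_eq_one.mp
      rw [SimpleGraph.card_neighborFinset_eq_degree]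
      exact hdl
    have hadj : G.Adj l w0 := by
      rw [← SimpleGraph.mem_neighborFinset, hw0]
      exact Finset.mem_singleton_self w0
    have hBnorm : ‖∑ w ∈ G.neighborFinset l, q l w‖ = 1 := by
      rw [hw0, Finset.sum_singleton]
      exact hunit l w0 hadj
    set B := ∑ w ∈ G.neighborFinset l, q l w with hB
    have h1 : ∑ j : Fin k, (B j)^2 = 1 := hsumsq B hBnorm
    have hnn : (0:ℝ) ≤ ∑ j : Fin k, |B j| := Finset.sum_nonneg fun j _ => abs_nonneg _
    have hcs : (∑ j : Fin k, |B j|)^2 ≤ (k:ℝ) := by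
      calc (∑ j : Fin k, |B j|)^2
          ≤ ((Finset.univ : Finset (Fin k)).card : ℝ) * ∑ j : Fin k, |B j|^2 := by
            exact_mod_cast sq_sum_le_card_mul_sum_sq (s := (Finset.univ : Finset (Fin k))) (f := fun j => |B j|)
        _ = (k:ℝ) := by
            rw [Finset.card_univ, Fintype.card_fin,
              show ∑ j : Fin k, |B j|^2 = ∑ j : Fin k, (B j)^2 from
                Finset.sum_congr rfl fun j _ => sq_abs _, h1, mul_one]
    exact (Real.le_sqrt hnn (Nat.cast_nonneg k)).mpr hcs
  -- assemble
  calc (G.degree x : ℝ)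
      ≤ ∑ y ∈ G.neighborFinset x, ∑ j : Fin k, |q y x j| := hstep1
    _ = ∑ j : Fin k, ∑ y ∈ G.neighborFinset x, |q y x j| := Finset.sum_comm
    _ ≤ ∑ j : Fin k, ∑ l ∈ L, |(∑ w ∈ G.neighborFinset l, q l w) j| :=
        Finset.sum_le_sum fun j _ => hstep2 j
    _ = ∑ l ∈ L, ∑ j : Fin k, |(∑ w ∈ G.neighborFinset l, q l w) j| := Finset.sum_comm
    _ ≤ ∑ _l ∈ L, Real.sqrt k := Finset.sum_le_sum hstep3
    _ = Real.sqrt k * L.card := by rw [Finset.sum_const, nsmul_eq_mul, mul_comm]
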